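/- Ping-pong lemma: Let a group G act on a set X, let f1, f2 ∈ G, and suppose there exist four pairwise disjoint nonempty subsets B1⁻, B2⁻, B1⁺, B2⁺ of X such that for i = 1,2, fi maps the complement of Bi⁻ into Bi⁺ and fi⁻¹ maps the complement of Bi⁺ into Bi⁻. Then the subgroup generated by f1 and f2 is free of rank 2. -/

import Mathlib

open Pointwise

/-- Ping-pong lemma: if `f₁, f₂` in a group acting on `X` admit four pairwise
disjoint nonempty ping-pong sets, then the subgroup they generate is free of
rank 2, i.e. the natural map from the free group on two generators is injective. -/
theorem pingPong_free_of_rank_two {G X : Type*} [Group G] [MulAction G X]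
    (f₁ f₂ : G) (B₁m B₂m B₁p B₂p : Set X)
    (h₁m : B₁m.Nonempty) (h₂m : B₂m.Nonempty) (h₁p : B₁p.Nonempty) (h₂p : B₂p.Nonempty)
    (hdisj : Pairwise (Function.onFun Disjoint ![B₁m, B₂m, B₁p, B₂p]))
    (hf₁ : ∀ x : X, x ∉ B₁m → f₁ • x ∈ B₁p)
    (hf₁' : ∀ x : X, x ∉ B₁p → f₁⁻¹ • x ∈ B₁m)
    (hf₂ : ∀ x : X, x ∉ B₂m → f₂ • x ∈ B₂p)
    (hf₂' : ∀ x : X, x ∉ B₂p → f₂⁻¹ • x ∈ B₂m)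
    (hbase : ∃ x : X, x ∉ B₁m ∧ x ∉ B₂m ∧ x ∉ B₁p ∧ x ∉ B₂p) :
    Function.Injective ⇑(FreeGroup.lift (fun b : Bool => if b then f₁ else f₂)) := by
  have d01 : Disjoint B₁m B₂m := by simpa [Function.onFun] using hdisj (show (0:Fin 4) ≠ 1 by decide)
  have d02 : Disjoint B₁m B₁p := by simpa [Function.onFun] using hdisj (show (0:Fin 4) ≠ 2 by decide)
  have d03 : Disjoint B₁m B₂p := by simpa [Function.onFun] using hdisj (show (0:Fin 4) ≠ 3 by decide)
  have d12 : Disjoint B₂m B₁p := by simpa [Function.onFun] using hdisj (show (1:Fin 4) ≠ 2 by decide)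
  have d13 : Disjoint B₂m B₂p := by simpa [Function.onFun] using hdisj (show (1:Fin 4) ≠ 3 by decide)
  have d23 : Disjoint B₁p B₂p := by simpa [Function.onFun] using hdisj (show (2:Fin 4) ≠ 3 by decide)
  have key := FreeGroup.injective_lift_of_ping_pong
    (a := fun b : ULift Bool => if b.down then f₁ else f₂)
    (X := fun b : ULift Bool => if b.down then B₁p else B₂p)
    (Y := fun b : ULift Bool => if b.down then B₁m else B₂m)
    ?_ ?_ ?_ ?_ ?_ ?_
  · have hcomp : (FreeGroup.lift (fun b : Bool => if b then f₁ else f₂)) =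
        (FreeGroup.lift (fun b : ULift Bool => if b.down then f₁ else f₂)).comp
          (FreeGroup.freeGroupCongr Equiv.ulift.symm).toMonoidHom := by
      ext b; cases b <;> simp
    rw [hcomp, MonoidHom.coe_comp]
    exact key.comp (MulEquiv.injective _)
  · rintro ⟨b⟩; cases b <;> simp [h₁p, h₂p]
  · rintro ⟨i⟩ ⟨j⟩ hij
    cases i <;> cases j <;> simp_all [Function.onFun, d23, d23.symm]
  · rintro ⟨i⟩ ⟨j⟩ hij
    cases i <;> cases j <;> simp_all [Function.onFun, d01, d01.symm]
  · rintro ⟨i⟩ ⟨j⟩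
    cases i <;> cases j <;> simp [d02.symm, d03.symm, d12.symm, d13.symm]
  · rintro ⟨b⟩ x hx
    obtain ⟨y, hy, rfl⟩ := hx
    cases b <;> simp_all
  · rintro ⟨b⟩ x hx
    obtain ⟨y, hy, rfl⟩ := hx
    cases b <;> simp_all
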